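/- For the 2-coloring of [1,n] given by coloring i with color 0 if i ≤ 4n/11 or i > 10n/11, and color 1 otherwise, the number of monochromatic Schur triples {i, j, i+j} with i < j and i+j ≤ n is n²/22 + O(n). Precisely, there exists a constant C such that for all n, the count differs from n²/22 by at most C·n. -/

import Mathlib

open Finset

/-- Number of monochromatic Schur triples (i, j, i+j), i < j, i+j ≤ n, of a coloring c. -/
def schurCount (n : ℕ) (c : ℕ → ℕ) : ℕ :=
  ((Finset.Icc 1 n ×ˢ Finset.Icc 1 n).filter
    (fun p => p.1 < p.2 ∧ p.1 + p.2 ≤ n ∧ c p.1 = c p.2 ∧ c p.2 = c (p.1 + p.2))).card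

/-- The coloring 0^{4n/11} 1^{6n/11} 0^{n/11}: color 0 if i ≤ 4n/11 or i > 10n/11, else 1. -/
def optColoring (n : ℕ) (i : ℕ) : ℕ :=
  if i ≤ 4 * n / 11 ∨ 10 * n / 11 < i then 0 else 1

lemma gauss0 (h : ℕ) : 2 * ∑ i ∈ Ioc 0 h, (i : ℤ) = h * (h + 1) := by
  induction h with
  | zero => simp
  | succ k ih =>
    rw [Finset.sum_Ioc_succ_top (Nat.zero_le _)]
    push_cast
    push_cast at ih
    linear_combination ih

lemma gaussIoc (l m : ℕ) (h : l ≤ m) : 2 * ∑ i ∈ Ioc l m, (i : ℤ) = m*(m+1) - l*(l+1) := by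
  have h2 := Finset.sum_Ioc_consecutive (fun i => (i:ℤ)) (Nat.zero_le l) h
  have g1 := gauss0 l; have g2 := gauss0 m
  simp -failIfUnchanged only at h2
  linarith

lemma trunc_sum (l m u : ℕ) (c e : ℤ) (hlm : l ≤ m) (hmu : m ≤ u) (f : ℕ → ℕ)
    (hzero : ∀ i ∈ Ioc m u, f i = 0)
    (hval : ∀ i ∈ Ioc l m, ((f i : ℕ) : ℤ) = c - e * i) :
    2 * (∑ i ∈ Ioc l u, (f i : ℤ)) = 2 * ((m:ℤ) - l) * c - e * (m*(m+1) - l*(l+1)) := by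
  rw [← Finset.sum_Ioc_consecutive _ hlm hmu]
  have hz : ∑ i ∈ Ioc m u, (f i : ℤ) = 0 :=
    Finset.sum_eq_zero (fun i hi => by rw [hzero i hi]; simp)
  rw [hz, add_zero, Finset.sum_congr rfl hval, Finset.sum_sub_distrib,
    Finset.sum_const, ← Finset.mul_sum, nsmul_eq_mul, Nat.card_Ioc, Nat.cast_sub hlm]
  have hg := gaussIoc l m hlm
  linear_combination (-e) * hg

lemma count_fib (n : ℕ) (c : ℕ → ℕ) :
    schurCount n c
      = ∑ i ∈ Ioc 0 n, ((Icc 1 n).filter (fun j => i < j ∧ i + j ≤ n ∧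
          c i = c j ∧ c j = c (i + j))).card := by
  have hIO : Finset.Icc 1 n = Finset.Ioc 0 n := by ext x; simp; omega
  simp only [schurCount, Finset.card_filter, Finset.sum_product, hIO]

lemma count_formula (n a b h1 h3 d : ℕ) (hn : 22 ≤ n)
    (ha : a = 4*n/11) (hb : b = 10*n/11) (hh1 : h1 = (a-1)/2)
    (hh3 : h3 = (b-1)/2) (hd : d = n - b) :
    2 * (schurCount n (optColoring n) : ℤ) =
      2*h1*a - 2*h1*(h1+1) + (d:ℤ)*(d-1) + 2*((h3:ℤ)-a)*b - 2*h3*(h3+1) + 2*a*(a+1) := by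
  -- fiberwise description
  have fib1 : ∀ i ∈ Ioc 0 a, ((Icc 1 n).filter (fun j => i < j ∧ i + j ≤ n ∧
      optColoring n i = optColoring n j ∧ optColoring n j = optColoring n (i+j))).card
      = (a - i - i) + (n - i - b) := by
    intro i hi
    simp only [mem_Ioc] at hi
    have hset : (Icc 1 n).filter (fun j => i < j ∧ i + j ≤ n ∧
        optColoring n i = optColoring n j ∧ optColoring n j = optColoring n (i+j))
        = Icc (i+1) (a-i) ∪ Icc (b+1) (n-i) := by
      ext j
      rw [mem_filter]
      simp only [mem_filter, mem_Icc, mem_union, optColoring]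
      split_ifs <;>
        simp -failIfUnchanged only [and_false, false_and, and_true, true_and, false_iff, iff_false] <;>
        first | omega | tauto
    have hdisj : Disjoint (Icc (i+1) (a-i)) (Icc (b+1) (n-i)) := by
      rw [Finset.disjoint_left]
      intro x hx hx'
      simp only [mem_Icc] at hx hx'
      omega
    rw [hset, Finset.card_union_of_disjoint hdisj, Nat.card_Icc, Nat.card_Icc]
    omega
  have fib2 : ∀ i ∈ Ioc a b, ((Icc 1 n).filter (fun j => i < j ∧ i + j ≤ n ∧
      optColoring n i = optColoring n j ∧ optColoring n j = optColoring n (i+j))).card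
      = b - i - i := by
    intro i hi
    simp only [mem_Ioc] at hi
    have hset : (Icc 1 n).filter (fun j => i < j ∧ i + j ≤ n ∧
        optColoring n i = optColoring n j ∧ optColoring n j = optColoring n (i+j))
        = Icc (i+1) (b-i) := by
      ext j
      rw [mem_filter]
      simp only [mem_filter, mem_Icc, optColoring]
      split_ifs <;>
        simp -failIfUnchanged only [and_false, false_and, and_true, true_and, false_iff, iff_false] <;>
        first | omega | tauto
    rw [hset, Nat.card_Icc]
    omega
  have fib3 : ∀ i ∈ Ioc b n, ((Icc 1 n).filter (fun j => i < j ∧ i + j ≤ n ∧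
      optColoring n i = optColoring n j ∧ optColoring n j = optColoring n (i+j))).card
      = 0 := by
    intro i hi
    simp only [mem_Ioc] at hi
    have hset : (Icc 1 n).filter (fun j => i < j ∧ i + j ≤ n ∧
        optColoring n i = optColoring n j ∧ optColoring n j = optColoring n (i+j))
        = ∅ := by
      ext j
      rw [mem_filter]
      simp only [mem_filter, mem_Icc, optColoring, Finset.notMem_empty, iff_false]
      split_ifs <;>
        simp -failIfUnchanged only [and_false, false_and, and_true, true_and, not_and, not_or, not_le, not_lt] <;>
        first | omega | tauto
    rw [hset, Finset.card_empty]
  have hab : a ≤ b := by omega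
  have hbn : b ≤ n := by omega
  rw [count_fib, ← Finset.sum_Ioc_consecutive _ (Nat.zero_le b) hbn,
    ← Finset.sum_Ioc_consecutive _ (Nat.zero_le a) hab,
    Finset.sum_congr rfl fib1, Finset.sum_congr rfl fib2, Finset.sum_congr rfl fib3,
    Finset.sum_const_zero, add_zero, Finset.sum_add_distrib]
  push_cast
  have e1 : 2 * ∑ i ∈ Ioc 0 a, ((a - i - i : ℕ) : ℤ)
      = 2 * ((h1:ℤ) - 0) * a - 2 * ((h1:ℤ)*(h1+1) - 0*(0+1)) :=
    trunc_sum 0 h1 a a 2 (by omega) (by omega) _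
      (fun i hi => by simp only [mem_Ioc] at hi; omega)
      (fun i hi => by simp only [mem_Ioc] at hi; omega)
  have e2 : 2 * ∑ i ∈ Ioc 0 a, ((n - i - b : ℕ) : ℤ)
      = 2 * (((d-1 : ℕ):ℤ) - 0) * d - 1 * (((d-1:ℕ):ℤ)*((d-1:ℕ)+1) - 0*(0+1)) :=
    trunc_sum 0 (d-1) a d 1 (by omega) (by omega) _
      (fun i hi => by simp only [mem_Ioc] at hi; omega)
      (fun i hi => by simp only [mem_Ioc] at hi; omega)
  have e3 : 2 * ∑ i ∈ Ioc a b, ((b - i - i : ℕ) : ℤ)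
      = 2 * ((h3:ℤ) - a) * b - 2 * ((h3:ℤ)*(h3+1) - (a:ℤ)*(a+1)) :=
    trunc_sum a h3 b b 2 (by omega) (by omega) _
      (fun i hi => by simp only [mem_Ioc] at hi; omega)
      (fun i hi => by simp only [mem_Ioc] at hi; omega)
  have hdc : ((d - 1 : ℕ) : ℤ) = (d:ℤ) - 1 := by omega
  rw [hdc] at e2
  linear_combination e1 + e2 + e3

lemma arith (n a b h1 h3 d : ℤ) (hn : 22 ≤ n)
    (ha1 : 11*a ≤ 4*n) (ha2 : 4*n ≤ 11*a + 10)
    (hb1 : 11*b ≤ 10*n) (hb2 : 10*n ≤ 11*b + 10)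
    (hh1a : 2*h1 + 1 ≤ a) (hh1b : a ≤ 2*h1 + 2)
    (hh3a : 2*h3 + 1 ≤ b) (hh3b : b ≤ 2*h3 + 2)
    (hd : d = n - b) :
    |22*(2*h1*a - 2*h1*(h1+1) + d*(d-1) + 2*(h3-a)*b - 2*h3*(h3+1) + 2*a*(a+1)) - 2*n^2| ≤ 4000*n := by
  rw [abs_le]
  constructor <;>
  nlinarith [mul_nonneg (by linarith : (0:ℤ) ≤ 4*n - 11*a) (by linarith : (0:ℤ) ≤ 10 - (4*n - 11*a)),
    mul_nonneg (by linarith : (0:ℤ) ≤ 10*n - 11*b) (by linarith : (0:ℤ) ≤ 10 - (10*n - 11*b)),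
    mul_nonneg (by linarith : (0:ℤ) ≤ a - 2*h1 - 1) (by linarith : (0:ℤ) ≤ 2*h1 + 2 - a),
    mul_nonneg (by linarith : (0:ℤ) ≤ b - 2*h3 - 1) (by linarith : (0:ℤ) ≤ 2*h3 + 2 - b),
    sq_nonneg (4*n - 11*a), sq_nonneg (10*n - 11*b), sq_nonneg (a - 2*h1 - 1), sq_nonneg (b - 2*h3 - 1),
    mul_pos (by linarith : (0:ℤ) < n) (by linarith : (0:ℤ) < n)]

theorem schurCount_optColoring :
    ∃ C : ℝ, ∀ n : ℕ,
      |(schurCount n (optColoring n) : ℝ) - (n : ℝ) ^ 2 / 22| ≤ C * n := by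
  refine ⟨1000, fun n => ?_⟩
  by_cases hn : n < 22
  · -- small case
    have hc : (schurCount n (optColoring n) : ℝ) ≤ (n:ℝ) * n := by
      have h1 : schurCount n (optColoring n) ≤ n * n := by
        calc schurCount n (optColoring n)
            ≤ (Finset.Icc 1 n ×ˢ Finset.Icc 1 n).card := Finset.card_filter_le _ _
          _ = n * n := by rw [Finset.card_product, Nat.card_Icc]; simp
      exact_mod_cast h1
    have hc0 : (0:ℝ) ≤ (schurCount n (optColoring n) : ℝ) := by positivity
    have hnr : (n:ℝ) ≤ 21 := by exact_mod_cast Nat.lt_succ_iff.mp hn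
    have hnr0 : (0:ℝ) ≤ (n:ℝ) := by positivity
    rw [abs_le]
    constructor <;> nlinarith
  · push_neg at hn
    set a := 4*n/11 with ha
    set b := 10*n/11 with hb
    set h1 := (a-1)/2 with hh1
    set h3 := (b-1)/2 with hh3
    set d := n - b with hd
    have key := count_formula n a b h1 h3 d hn ha hb hh1 hh3 hd
    have habs := arith n a b h1 h3 d (by exact_mod_cast hn)
      (by omega) (by omega) (by omega) (by omega) (by omega) (by omega) (by omega) (by omega)
      (by omega)
    rw [← key] at habs
    have habsR : |44 * (schurCount n (optColoring n) : ℝ) - 2*(n:ℝ)^2| ≤ 4000*(n:ℝ) := by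
      have : ((22 * (2 * (schurCount n (optColoring n) : ℤ)) - 2*(n:ℤ)^2 : ℤ) : ℝ)
          = 44 * (schurCount n (optColoring n) : ℝ) - 2*(n:ℝ)^2 := by push_cast; ring
      calc |44 * (schurCount n (optColoring n) : ℝ) - 2*(n:ℝ)^2|
          = |((22 * (2 * (schurCount n (optColoring n) : ℤ)) - 2*(n:ℤ)^2 : ℤ) : ℝ)| := by rw [this]
        _ = ((|22 * (2 * (schurCount n (optColoring n) : ℤ)) - 2*(n:ℤ)^2| : ℤ) : ℝ) := by
            rw [Int.cast_abs]
        _ ≤ ((4000*(n:ℤ) : ℤ) : ℝ) := by exact_mod_cast habs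
        _ = 4000*(n:ℝ) := by push_cast; ring

    rw [abs_le] at habsR ⊢
    constructor <;> [linarith; linarith]
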